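/- Under the covariate-shift assumptions (p_S(Y|X) = p_T(Y|X), target support contained in source support) and with n₁ = n₀ = n/2, the importance-weighted difference-in-means estimator τ̂ = (1/n₁)Σ_i W_i A_i Y_i¹ − (1/n₀)Σ_i W_i(1−A_i)Y_i⁰, where (X_i,Y_i) are i.i.d. from the source, W_i = p_T(X_i)/p_S(X_i), and treatment assignment Z conditional on X is uniform over balanced assignments accepted by a symmetric balance rule φ(x, z) = φ(x, −z), satisfies E[τ̂] = E_T[Y¹ − Y⁰]. -/

import Mathlib

open MeasureTheory ProbabilityTheory

open scoped ENNReal NNReal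

lemma aux_measurePreserving_eval {ι : Type*} [Fintype ι] {α : ι → Type*}
    [∀ i, MeasurableSpace (α i)] (μ : ∀ i, Measure (α i))
    [∀ i, IsProbabilityMeasure (μ i)] (i : ι) :
    MeasurePreserving (fun ω : ∀ j, α j => ω i) (Measure.pi μ) (μ i) := by
  classical
  refine ⟨measurable_pi_apply i, ?_⟩
  ext s hs
  rw [Measure.map_apply (measurable_pi_apply i) hs]
  have h1 : (fun ω : ∀ j, α j => ω i) ⁻¹' s
      = Set.pi Set.univ (Function.update (fun j => (Set.univ : Set (α j))) i s) :=
    Set.eval_preimage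
  rw [h1, Measure.pi_pi]
  rw [Finset.prod_eq_single i (fun j _ hj => by simp [Function.update_of_ne hj]) (by simp)]
  simp


/-- Unbiasedness of the importance-weighted estimator under Target
Balance. Source samples `(Xᵢ, Yᵢ⁰, Yᵢ¹)` are i.i.d. with covariate density `pS`
(w.r.t. `ν`) and shared outcome kernel `κ` (so `p_S(Y|X) = p_T(Y|X)`); the target
has density `pT` with overlap; treatment assignment, conditionally on the
covariates, is uniform over balanced assignments accepted by a sign-symmetric
balance rule `φ(x,z) = φ(x,-z)`; `Wᵢ = pT(Xᵢ)/pS(Xᵢ)` and `n₁ = n₀ = n/2`. Then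
`E[τ̂] = E_T[Y¹ - Y⁰]`. -/
theorem stmt_14 {X : Type*} [MeasurableSpace X]
    (n : ℕ) (hn : 0 < n) (heven : Even n)
    (ν : Measure X) [SigmaFinite ν]
    (pS pT : X → ENNReal) (hpS : Measurable pS) (hpT : Measurable pT)
    (hSfin : ∀ x, pS x ≠ ⊤) (hTfin : ∀ x, pT x ≠ ⊤)
    (hS : IsProbabilityMeasure (ν.withDensity pS))
    (hT : IsProbabilityMeasure (ν.withDensity pT))
    (hover : ∀ x, 0 < pT x → 0 < pS x)
    -- potential-outcome kernel, identical for source and target (S-admissibility):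
    -- given X = x, (Y⁰, Y¹) ~ κ x
    (κ : ProbabilityTheory.Kernel X (ℝ × ℝ)) [ProbabilityTheory.IsMarkovKernel κ]
    -- symmetric balance rule depending only on covariates
    (φ : (Fin n → X) → (Fin n → Bool) → Bool)
    (hφsym : ∀ x z, φ x z = φ x (fun i => !(z i)))
    (T : (Fin n → X) → Finset (Fin n → Bool))
    (hTdef : ∀ x, T x = Finset.univ.filter fun z : Fin n → Bool =>
      ((Finset.univ.filter fun i => z i).card = n / 2 ∧ φ x z = true))
    (hne : ∀ x, (T x).Nonempty)
    -- importance weight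
    (W : X → ℝ) (hW : ∀ x, W x = (pT x / pS x).toReal)
    -- the importance-weighted difference-in-means estimator, n₁ = n₀ = n/2
    (τ : (Fin n → X × ℝ × ℝ) → (Fin n → Bool) → ℝ)
    (hτ : ∀ ω z, τ ω z = (2 / (n : ℝ)) *
      ∑ i, W (ω i).1 * (if z i then (ω i).2.2 else -(ω i).2.1))
    -- integrability assumptions
    (hint : Integrable
      (fun ω : Fin n → X × ℝ × ℝ =>
        (∑ z ∈ T (fun i => (ω i).1), τ ω z) / (T (fun i => (ω i).1)).card)
      (Measure.pi fun _ : Fin n => (ν.withDensity pS).compProd κ))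
    (hintS1 : Integrable (fun p : X × ℝ × ℝ => (pT p.1 / pS p.1).toReal * p.2.1)
      ((ν.withDensity pS).compProd κ))
    (hintS2 : Integrable (fun p : X × ℝ × ℝ => (pT p.1 / pS p.1).toReal * p.2.2)
      ((ν.withDensity pS).compProd κ))
    (hintT : Integrable (fun p : X × ℝ × ℝ => p.2.2 - p.2.1)
      ((ν.withDensity pT).compProd κ)) :
    ∫ ω, (∑ z ∈ T (fun i => (ω i).1), τ ω z) / (T (fun i => (ω i).1)).card
        ∂(Measure.pi fun _ : Fin n => (ν.withDensity pS).compProd κ)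
      = ∫ p, p.2.2 - p.2.1 ∂((ν.withDensity pT).compProd κ) := by
  classical
  set μS := (ν.withDensity pS).compProd κ with hμSdef
  set g : X × ℝ × ℝ → ℝ := fun p => W p.1 * (p.2.2 - p.2.1) with hgdef
  -- Step 1: pointwise identity
  have key : ∀ ω : Fin n → X × ℝ × ℝ,
      (∑ z ∈ T (fun i => (ω i).1), τ ω z) / ((T (fun i => (ω i).1)).card : ℝ)
        = (1 / (n : ℝ)) * ∑ i, g (ω i) := by
    intro ω
    set x : Fin n → X := fun i => (ω i).1 with hx
    have hmemT : ∀ z : Fin n → Bool, z ∈ T x ↔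
        ((Finset.univ.filter fun i => z i).card = n / 2 ∧ φ x z = true) := by
      intro z; rw [hTdef]; simp
    obtain ⟨k, hk⟩ := heven
    have hneg : ∀ z : Fin n → Bool, z ∈ T x → (fun i => !(z i)) ∈ T x := by
      intro z hz
      rw [hmemT] at hz ⊢
      refine ⟨?_, (hφsym x z) ▸ hz.2⟩
      have h3 : (Finset.univ.filter fun i : Fin n => ¬ ((z i : Prop)))
          = (Finset.univ.filter fun i => (!(z i) : Bool) = true) := by
        apply Finset.filter_congr; intro i _; simp
      have h2 := Finset.card_filter_add_card_filter_not
        (s := (Finset.univ : Finset (Fin n))) (p := fun i => (z i : Prop))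
      rw [h3, Finset.card_univ, Fintype.card_fin] at h2
      simp only [hz.1] at h2 ⊢
      omega
    have hcc : ∀ i, ((T x).filter fun z => (z i : Prop)).card
        = ((T x).filter fun z => ¬ (z i : Prop)).card := by
      intro i
      apply Finset.card_bij' (fun z _ => fun j => !(z j)) (fun z _ => fun j => !(z j))
      · intro z hz
        simp only [Finset.mem_filter] at hz ⊢
        exact ⟨hneg z hz.1, by simp [hz.2]⟩
      · intro z hz
        simp only [Finset.mem_filter] at hz ⊢
        refine ⟨hneg z hz.1, ?_⟩
        simp only [Bool.not_eq_true] at hz ⊢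
        simp [Bool.not_eq_true'] at hz ⊢
        exact hz.2
      · intro z _; funext j; simp
      · intro z _; funext j; simp
    have hTcard : ∀ i, (T x).card = ((T x).filter fun z => (z i : Prop)).card
        + ((T x).filter fun z => ¬ (z i : Prop)).card := fun i =>
      (Finset.card_filter_add_card_filter_not (s := T x) (p := fun z => (z i : Prop))).symm
    have hcard0 : ((T x).card : ℝ) ≠ 0 := by
      exact_mod_cast Finset.card_ne_zero_of_mem (hne x).choose_spec
    have hsum : ∀ i, (∑ z ∈ T x, (if (z i : Prop) then (ω i).2.2 else -(ω i).2.1))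
        = (((T x).card : ℝ) / 2) * ((ω i).2.2 - (ω i).2.1) := by
      intro i
      rw [Finset.sum_ite, Finset.sum_const, Finset.sum_const]
      have h2 : ((T x).card : ℝ) = 2 * (((T x).filter fun z => (z i : Prop)).card : ℝ) := by
        rw [hTcard i, ← hcc i]; push_cast; ring
      rw [nsmul_eq_mul, nsmul_eq_mul, ← hcc i, h2]
      ring
    have hstep : ∑ z ∈ T x, τ ω z
        = (2 / (n : ℝ)) * ((((T x).card : ℝ) / 2) * ∑ i, g (ω i)) := by
      simp only [hτ]
      rw [← Finset.mul_sum, Finset.sum_comm]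
      congr 1
      have hterm : ∀ i : Fin n,
          (∑ z ∈ T x, W (ω i).1 * (if (z i : Prop) then (ω i).2.2 else -(ω i).2.1))
            = (((T x).card : ℝ) / 2) * g (ω i) := by
        intro i
        rw [← Finset.mul_sum, hsum i]
        simp only [hgdef]
        ring
      rw [Finset.sum_congr rfl fun i _ => hterm i, ← Finset.mul_sum]
    rw [hstep]
    field_simp
  -- Step 2: integrability of g
  have hgint : Integrable g μS := by
    have h : g = (fun p : X × ℝ × ℝ => (pT p.1 / pS p.1).toReal * p.2.2)
        - fun p => (pT p.1 / pS p.1).toReal * p.2.1 := by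
      funext p; simp only [hgdef, hW, Pi.sub_apply]; ring
    rw [h]; exact hintS2.sub hintS1
  -- Step 3: reduce pi integral to single integral
  have hrw : (fun ω : Fin n → X × ℝ × ℝ =>
      (∑ z ∈ T (fun i => (ω i).1), τ ω z) / ((T (fun i => (ω i).1)).card : ℝ))
      = fun ω => (1 / (n : ℝ)) * ∑ i, g (ω i) := funext key
  rw [hrw]
  have hmp : ∀ i : Fin n, MeasurePreserving (fun ω : Fin n → X × ℝ × ℝ => ω i)
      (Measure.pi fun _ : Fin n => μS) μS :=
    fun i => aux_measurePreserving_eval (fun _ => μS) i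
  have hci : ∀ i : Fin n, Integrable (fun ω : Fin n → X × ℝ × ℝ => g (ω i))
      (Measure.pi fun _ : Fin n => μS) :=
    fun i => ((hmp i).integrable_comp hgint.1).mpr hgint
  rw [integral_const_mul, integral_finset_sum _ fun i _ => hci i]
  have hone : ∀ i : Fin n, ∫ ω, g (ω i) ∂(Measure.pi fun _ : Fin n => μS)
      = ∫ p, g p ∂μS := by
    intro i
    rw [← integral_map (measurable_pi_apply i).aemeasurable ((hmp i).map_eq.symm ▸ hgint.1),
      (hmp i).map_eq]
  simp only [hone, Finset.sum_const, Finset.card_univ, Fintype.card_fin, nsmul_eq_mul]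
  have hn' : (n : ℝ) ≠ 0 := Nat.cast_ne_zero.mpr hn.ne'
  rw [show (1 / (n : ℝ)) * ((n : ℝ) * ∫ p, g p ∂μS) = ∫ p, g p ∂μS by field_simp]
  -- Step 4: change of measure
  rw [hμSdef] at hgint ⊢
  rw [Measure.integral_compProd hgint, Measure.integral_compProd hintT]
  have hinner : ∀ x : X, ∫ y : ℝ × ℝ, g (x, y) ∂(κ x)
      = W x * ∫ y : ℝ × ℝ, y.2 - y.1 ∂(κ x) := by
    intro x; simp only [hgdef]; rw [integral_const_mul]
  simp only [hinner]
  -- withDensity change of variables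
  have hSd : ν.withDensity pS = ν.withDensity (fun x => ((pS x).toNNReal : ℝ≥0∞)) := by
    congr 1; funext x; exact (ENNReal.coe_toNNReal (hSfin x)).symm
  have hTd : ν.withDensity pT = ν.withDensity (fun x => ((pT x).toNNReal : ℝ≥0∞)) := by
    congr 1; funext x; exact (ENNReal.coe_toNNReal (hTfin x)).symm
  rw [hSd, hTd, integral_withDensity_eq_integral_smul hpS.ennreal_toNNReal,
    integral_withDensity_eq_integral_smul hpT.ennreal_toNNReal]
  refine integral_congr_ae (Filter.Eventually.of_forall fun x => ?_)
  have hcS : ((pS x).toNNReal : ℝ) = (pS x).toReal := rfl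
  have hcT : ((pT x).toNNReal : ℝ) = (pT x).toReal := rfl
  simp only [NNReal.smul_def, hcS, hcT, hW]
  by_cases hps : pS x = 0
  · have hpt : pT x = 0 := by
      by_contra h
      exact absurd (hover x (pos_iff_ne_zero.mpr h)) (by simp [hps])
    simp [hps, hpt]
  · have h1 : (pS x).toReal ≠ 0 := ENNReal.toReal_ne_zero.mpr ⟨hps, hSfin x⟩
    rw [ENNReal.toReal_div]
    show (pS x).toReal * ((pT x).toReal / (pS x).toReal * _) = (pT x).toReal * _
    field_simp
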